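/- For every constrained expression E and interpretation I, ε ∈ L_I(E) if and only if there exist a pair (X, φ) ∈ S^ε(E) and a Γ-realization r over I such that eval_{I,r}(φ) = 1. -/
import Mathlib


open Computability

/-- Words over the symbol alphabet `A` and the variable alphabet `V`. -/
abbrev Word (A V : Type) := List (A ⊕ V)

/-- Terms over an expression environment: variables, the empty word, letters,
catenation (the built-in binary function symbol `·`) and extra function symbols `F`. -/
inductive Tm (A V : Type) (F : ℕ → Type) : Type
  | var : V → Tm A V F
  | eps : Tm A V F
  | ltr : A → Tm A V F
  | cat : Tm A V F → Tm A V F → Tm A V F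
  | app : {k : ℕ} → F k → (Fin k → Tm A V F) → Tm A V F

/-- Quantifier-free boolean formulae: predicate symbols from `P` applied to terms,
combined by arbitrary `k`-ary boolean operators. -/
inductive Fm (A V : Type) (P F : ℕ → Type) : Type
  | atom : {k : ℕ} → P k → (Fin k → Tm A V F) → Fm A V P F
  | op : {k : ℕ} → ((Fin k → Bool) → Bool) → (Fin k → Fm A V P F) → Fm A V P F

/-- An expression interpretation: domain `Σ*` (i.e. `List A`), letters, `ε` and
catenation interpreted standardly; the remaining function and predicate symbols
are interpreted by arbitrary (total, functional) maps. -/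
structure Interp (A V : Type) (P F : ℕ → Type) where
  fn : {k : ℕ} → F k → (Fin k → List A) → List A
  pr : {k : ℕ} → P k → (Fin k → List A) → Bool

/-- Evaluation of a term under an interpretation and a realization `r : V → Σ*`. -/
def Tm.eval {A V : Type} {P F : ℕ → Type} (I : Interp A V P F) (r : V → List A) :
    Tm A V F → List A
  | .var x => r x
  | .eps => []
  | .ltr a => [a]
  | .cat t u => Tm.eval I r t ++ Tm.eval I r u
  | .app f ts => I.fn f fun i => Tm.eval I r (ts i)

/-- Evaluation of a boolean formula under an interpretation and a realization. -/
def Fm.eval {A V : Type} {P F : ℕ → Type} (I : Interp A V P F) (r : V → List A) :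
    Fm A V P F → Bool
  | .atom p ts => I.pr p fun i => Tm.eval I r (ts i)
  | .op o fs => o fun i => Fm.eval I r (fs i)

/-- Extension of a realization to a monoid morphism `(Σ ∪ Γ)* → Σ*`. -/
def rWord {A V : Type} (r : V → List A) (α : Word A V) : List A :=
  α.flatMap (Sum.elim (fun a => [a]) r)

/-- Constrained expressions over an expression environment `(A, V, P, F)`,
with sum as the only boolean operator over expressions. -/
inductive CExp (A V : Type) (P F : ℕ → Type) : Type
  | zero : CExp A V P F
  | word : Word A V → CExp A V P F
  | plus : CExp A V P F → CExp A V P F → CExp A V P F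
  | comp : CExp A V P F → CExp A V P F → CExp A V P F
  | star : CExp A V P F → CExp A V P F
  | constr : CExp A V P F → Fm A V P F → CExp A V P F
  | mtch : Word A V → CExp A V P F → CExp A V P F

/-- The `(I,r)`-language of a constrained expression. -/
def CExp.lang {A V : Type} {P F : ℕ → Type} (I : Interp A V P F) (r : V → List A) :
    CExp A V P F → Language A
  | .zero => 0
  | .word α => {rWord r α}
  | .plus E₁ E₂ => CExp.lang I r E₁ + CExp.lang I r E₂
  | .comp E₁ E₂ => CExp.lang I r E₁ * CExp.lang I r E₂
  | .star E₁ => (CExp.lang I r E₁)∗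
  | .constr E₁ φ => if Fm.eval I r φ then CExp.lang I r E₁ else 0
  | .mtch α E₁ => {w | w = rWord r α ∧ w ∈ CExp.lang I r E₁}

/-- The `I`-language of a constrained expression: union over all realizations. -/
def langI {A V : Type} {P F : ℕ → Type} (I : Interp A V P F) (E : CExp A V P F) :
    Language A :=
  {w | ∃ r : V → List A, w ∈ CExp.lang I r E}

/-- The set of variable symbols occurring in a word. -/
def varsW {A V : Type} (α : Word A V) : Set V := {x | Sum.inr x ∈ α}

/-- A word made only of variable symbols (i.e. a word of `Γ*`). -/
def onlyVars {A V : Type} (α : Word A V) : Prop := ∀ c ∈ α, ∃ x : V, c = Sum.inr x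

/-- The formula `⊤`. -/
def fmTrue {A V : Type} {P F : ℕ → Type} : Fm A V P F :=
  Fm.op (fun _ : Fin 0 → Bool => true) (fun i => i.elim0)

/-- Conjunction of two formulae. -/
def fmAnd {A V : Type} {P F : ℕ → Type} (φ ψ : Fm A V P F) : Fm A V P F :=
  Fm.op (fun v : Fin 2 → Bool => v 0 && v 1) ![φ, ψ]

/-- Substitution of `ε` for every variable of `X` in a term. -/
noncomputable def Tm.substEps {A V : Type} {F : ℕ → Type} (X : Set V) :
    Tm A V F → Tm A V F
  | .var x => open Classical in if x ∈ X then .eps else .var x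
  | .eps => .eps
  | .ltr a => .ltr a
  | .cat t u => .cat (Tm.substEps X t) (Tm.substEps X u)
  | .app f ts => .app f fun i => Tm.substEps X (ts i)

/-- Substitution of `ε` for every variable of `X` in a formula (`φ_{X←ε}`). -/
noncomputable def Fm.substEps {A V : Type} {P F : ℕ → Type} (X : Set V) :
    Fm A V P F → Fm A V P F
  | .atom p ts => .atom p fun i => Tm.substEps X (ts i)
  | .op o fs => .op o fun i => Fm.substEps X (fs i)

/-- The product `⊗` on indicator sets. -/
noncomputable def tensor {A V : Type} {P F : ℕ → Type}
    (S₁ S₂ : Set (Set V × Fm A V P F)) : Set (Set V × Fm A V P F) :=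
  {p | ∃ q₁ ∈ S₁, ∃ q₂ ∈ S₂,
      p = (q₁.1 ∪ q₂.1, Fm.substEps (q₁.1 ∪ q₂.1) (fmAnd q₁.2 q₂.2))}

/-- The indicator set `S^ε(E)`: pairs of a set of variables that must be erased and
a formula that must be satisfied for `ε` to belong to the language of `E`. -/
noncomputable def Seps {A V : Type} {P F : ℕ → Type} :
    CExp A V P F → Set (Set V × Fm A V P F)
  | .zero => ∅
  | .word α => {p | onlyVars α ∧ p = (varsW α, fmTrue)}
  | .mtch α E₁ => {p | onlyVars α ∧ p ∈ tensor {(varsW α, fmTrue)} (Seps E₁)}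
  | .plus E₁ E₂ => Seps E₁ ∪ Seps E₂
  | .comp E₁ E₂ => tensor (Seps E₁) (Seps E₂)
  | .star _ => {((∅ : Set V), fmTrue)}
  | .constr E₁ φ => {p | ∃ q ∈ Seps E₁, p = (q.1, Fm.substEps q.1 (fmAnd φ q.2))}

/-- The realization sending `X` to `ε` and agreeing with `r` elsewhere. -/
noncomputable def rX {A V : Type} (X : Set V) (r : V → List A) : V → List A :=
  open Classical in fun x => if x ∈ X then [] else r x

lemma tm_substEps_eval {A V : Type} {P F : ℕ → Type} (I : Interp A V P F)
    (r : V → List A) (X : Set V) (t : Tm A V F) :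
    Tm.eval I r (Tm.substEps X t) = Tm.eval I (rX X r) t := by
  induction t with
  | var x =>
    simp only [Tm.substEps, rX]
    split <;> simp_all [Tm.eval, rX]
  | eps => rfl
  | ltr a => rfl
  | cat t u iht ihu => simp [Tm.substEps, Tm.eval, iht, ihu]
  | app f ts ih => simp [Tm.substEps, Tm.eval, ih]

lemma fm_substEps_eval {A V : Type} {P F : ℕ → Type} (I : Interp A V P F)
    (r : V → List A) (X : Set V) (φ : Fm A V P F) :
    Fm.eval I r (Fm.substEps X φ) = Fm.eval I (rX X r) φ := by
  induction φ with
  | atom p ts => simp [Fm.substEps, Fm.eval, tm_substEps_eval]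
  | op o fs ih => simp [Fm.substEps, Fm.eval, ih]

lemma rX_eq_of_vanish {A V : Type} (X : Set V) (r : V → List A)
    (h : ∀ x ∈ X, r x = []) : rX X r = r := by
  funext x; simp only [rX]; split
  · exact (h x ‹_›).symm
  · rfl

lemma tm_substEps_idem {A V : Type} {F : ℕ → Type} (X : Set V) (t : Tm A V F) :
    Tm.substEps X (Tm.substEps X t) = Tm.substEps X t := by
  induction t with
  | var x =>
    simp only [Tm.substEps]
    split
    · rfl
    · simp only [Tm.substEps]; split <;> simp_all
  | eps => rfl
  | ltr a => rfl
  | cat t u iht ihu => simp [Tm.substEps, iht, ihu]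
  | app f ts ih => simp [Tm.substEps, ih]

lemma fm_substEps_idem {A V : Type} {P F : ℕ → Type} (X : Set V) (φ : Fm A V P F) :
    Fm.substEps X (Fm.substEps X φ) = Fm.substEps X φ := by
  induction φ with
  | atom p ts => simp [Fm.substEps, tm_substEps_idem]
  | op o fs ih => simp [Fm.substEps, ih]

lemma substEps_fmTrue {A V : Type} {P F : ℕ → Type} (X : Set V) :
    Fm.substEps X (fmTrue : Fm A V P F) = fmTrue := by
  simp only [fmTrue, Fm.substEps]
  congr
  funext i
  exact i.elim0

lemma fmTrue_eval {A V : Type} {P F : ℕ → Type} (I : Interp A V P F)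
    (r : V → List A) : Fm.eval I r (fmTrue : Fm A V P F) = true := rfl

lemma fmAnd_eval {A V : Type} {P F : ℕ → Type} (I : Interp A V P F)
    (r : V → List A) (φ ψ : Fm A V P F) :
    Fm.eval I r (fmAnd φ ψ) = (Fm.eval I r φ && Fm.eval I r ψ) := by
  simp [fmAnd, Fm.eval]

/-- Every formula in `Seps E` is fixed by erasing its own variable set. -/
lemma Seps_substEps_fix {A V : Type} {P F : ℕ → Type} (E : CExp A V P F) :
    ∀ p ∈ Seps E, Fm.substEps p.1 p.2 = p.2 := by
  induction E with
  | zero => intro p hp; exact absurd hp (Set.notMem_empty p)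
  | word α =>
    rintro p ⟨-, rfl⟩
    exact substEps_fmTrue _
  | plus E₁ E₂ ih₁ ih₂ =>
    rintro p (hp | hp)
    · exact ih₁ p hp
    · exact ih₂ p hp
  | comp E₁ E₂ ih₁ ih₂ =>
    rintro p ⟨q₁, -, q₂, -, rfl⟩
    exact fm_substEps_idem _ _
  | star E₁ ih =>
    rintro p rfl
    exact substEps_fmTrue _
  | constr E₁ φ ih =>
    rintro p ⟨q, -, rfl⟩
    exact fm_substEps_idem _ _
  | mtch α E₁ ih =>
    rintro p ⟨-, q₁, -, q₂, -, rfl⟩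
    exact fm_substEps_idem _ _

lemma tensor_sat_iff {A V : Type} {P F : ℕ → Type} (I : Interp A V P F)
    (S₁ S₂ : Set (Set V × Fm A V P F)) (r : V → List A) :
    (∃ p ∈ tensor S₁ S₂, (∀ x ∈ p.1, r x = []) ∧ Fm.eval I r p.2 = true) ↔
      ((∃ p ∈ S₁, (∀ x ∈ p.1, r x = []) ∧ Fm.eval I r p.2 = true) ∧
       (∃ p ∈ S₂, (∀ x ∈ p.1, r x = []) ∧ Fm.eval I r p.2 = true)) := by
  constructor
  · rintro ⟨p, ⟨q₁, hq₁, q₂, hq₂, rfl⟩, hvan, hev⟩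
    have hv₁ : ∀ x ∈ q₁.1, r x = [] := fun x hx => hvan x (Or.inl hx)
    have hv₂ : ∀ x ∈ q₂.1, r x = [] := fun x hx => hvan x (Or.inr hx)
    rw [fm_substEps_eval, rX_eq_of_vanish _ _ hvan, fmAnd_eval,
      Bool.and_eq_true] at hev
    exact ⟨⟨q₁, hq₁, hv₁, hev.1⟩, ⟨q₂, hq₂, hv₂, hev.2⟩⟩
  · rintro ⟨⟨q₁, hq₁, hv₁, he₁⟩, ⟨q₂, hq₂, hv₂, he₂⟩⟩
    refine ⟨(q₁.1 ∪ q₂.1, Fm.substEps (q₁.1 ∪ q₂.1) (fmAnd q₁.2 q₂.2)),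
      ⟨q₁, hq₁, q₂, hq₂, rfl⟩, ?_, ?_⟩
    · rintro x (hx | hx)
      · exact hv₁ x hx
      · exact hv₂ x hx
    · have hvan : ∀ x ∈ q₁.1 ∪ q₂.1, r x = [] := by
        rintro x (hx | hx)
        · exact hv₁ x hx
        · exact hv₂ x hx
      rw [fm_substEps_eval, rX_eq_of_vanish _ _ hvan, fmAnd_eval, he₁, he₂]
      rfl

lemma rWord_eq_nil_iff {A V : Type} (r : V → List A) (α : Word A V) :
    rWord r α = [] ↔ onlyVars α ∧ ∀ x ∈ varsW α, r x = [] := by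
  simp only [rWord, List.flatMap_eq_nil_iff, onlyVars, varsW, Set.mem_setOf_eq]
  constructor
  · intro h
    constructor
    · intro c hc
      rcases c with a | x
      · exact absurd (h _ hc) (by simp)
      · exact ⟨x, rfl⟩
    · intro x hx
      simpa using h _ hx
  · rintro ⟨honly, hvar⟩ c hc
    rcases honly c hc with ⟨x, rfl⟩
    simpa using hvar x hc

/-- Main inductive characterization, realization-wise. -/
lemma nullIr_iff {A V : Type} {P F : ℕ → Type} (I : Interp A V P F)
    (E : CExp A V P F) (r : V → List A) :
    (([] : List A) ∈ CExp.lang I r E) ↔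
      ∃ p ∈ Seps E, (∀ x ∈ p.1, r x = []) ∧ Fm.eval I r p.2 = true := by
  induction E with
  | zero =>
    simp [CExp.lang, Seps]
  | word α =>
    simp only [CExp.lang, Set.mem_singleton_iff, Seps]
    constructor
    · intro h
      obtain ⟨honly, hvar⟩ := (rWord_eq_nil_iff r α).mp h.symm
      exact ⟨(varsW α, fmTrue), ⟨honly, rfl⟩, hvar, rfl⟩
    · rintro ⟨p, ⟨honly, rfl⟩, hvar, -⟩
      exact ((rWord_eq_nil_iff r α).mpr ⟨honly, hvar⟩).symm
  | plus E₁ E₂ ih₁ ih₂ =>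
    have hadd : (([] : List A) ∈ CExp.lang I r (CExp.plus E₁ E₂)) ↔
        (([] : List A) ∈ CExp.lang I r E₁ ∨ ([] : List A) ∈ CExp.lang I r E₂) :=
      Iff.rfl
    rw [hadd, ih₁, ih₂]
    simp only [Seps, Set.mem_union]
    constructor
    · rintro (⟨p, hp, h⟩ | ⟨p, hp, h⟩)
      · exact ⟨p, Or.inl hp, h⟩
      · exact ⟨p, Or.inr hp, h⟩
    · rintro ⟨p, (hp | hp), h⟩
      · exact Or.inl ⟨p, hp, h⟩
      · exact Or.inr ⟨p, hp, h⟩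
  | comp E₁ E₂ ih₁ ih₂ =>
    have hmul : (([] : List A) ∈ CExp.lang I r (CExp.comp E₁ E₂)) ↔
        (([] : List A) ∈ CExp.lang I r E₁ ∧ ([] : List A) ∈ CExp.lang I r E₂) := by
      simp only [CExp.lang, Language.mem_mul]
      constructor
      · rintro ⟨a, ha, b, hb, hab⟩
        obtain ⟨rfl, rfl⟩ := List.append_eq_nil_iff.mp hab
        exact ⟨ha, hb⟩
      · rintro ⟨h₁, h₂⟩
        exact ⟨[], h₁, [], h₂, rfl⟩
    rw [hmul, ih₁, ih₂]
    exact (tensor_sat_iff I _ _ r).symm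
  | star E₁ ih =>
    simp only [CExp.lang, Seps]
    constructor
    · intro _
      exact ⟨(∅, fmTrue), rfl, fun x hx => absurd hx (Set.notMem_empty x), rfl⟩
    · intro _
      exact Language.nil_mem_kstar _
  | constr E₁ φ ih =>
    simp only [CExp.lang, Seps]
    constructor
    · intro h
      split at h
      · obtain ⟨q, hq, hv, he⟩ := ih.mp h
        refine ⟨(q.1, Fm.substEps q.1 (fmAnd φ q.2)), ⟨q, hq, rfl⟩, hv, ?_⟩
        rw [fm_substEps_eval, rX_eq_of_vanish _ _ hv, fmAnd_eval, he, ‹Fm.eval I r φ = true›]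
        rfl
      · exact absurd h (fun h => h.elim)
    · rintro ⟨p, ⟨q, hq, rfl⟩, hv, he⟩
      rw [fm_substEps_eval, rX_eq_of_vanish _ _ hv, fmAnd_eval, Bool.and_eq_true] at he
      rw [if_pos he.1]
      exact ih.mpr ⟨q, hq, hv, he.2⟩
  | mtch α E₁ ih =>
    simp only [CExp.lang, Set.mem_setOf_eq, Seps]
    constructor
    · rintro ⟨hα, h₁⟩
      obtain ⟨honly, hvar⟩ := (rWord_eq_nil_iff r α).mp hα.symm
      obtain ⟨q, hq, hv, he⟩ := ih.mp h₁
      obtain ⟨p, hp, hres⟩ := (tensor_sat_iff I {(varsW α, fmTrue)} (Seps E₁) r).mpr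
        ⟨⟨(varsW α, fmTrue), rfl, hvar, rfl⟩, ⟨q, hq, hv, he⟩⟩
      exact ⟨p, ⟨honly, hp⟩, hres⟩
    · rintro ⟨p, ⟨honly, hp⟩, hres⟩
      obtain ⟨⟨p₁, hp₁, hv₁, -⟩, ⟨q, hq, hv, he⟩⟩ :=
        (tensor_sat_iff I {(varsW α, fmTrue)} (Seps E₁) r).mp ⟨p, hp, hres⟩
      rw [Set.mem_singleton_iff] at hp₁
      subst hp₁
      exact ⟨((rWord_eq_nil_iff r α).mpr ⟨honly, hv₁⟩).symm, ih.mpr ⟨q, hq, hv, he⟩⟩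

/-- `ε ∈ L_I(E)` iff there exist a pair `(X, φ) ∈ S^ε(E)` and a realization `r`
such that `eval_{I,r}(φ) = 1`. -/
theorem nullI_iff_Seps_sat {A V : Type} {P F : ℕ → Type}
    (I : Interp A V P F) (E : CExp A V P F) :
    (([] : List A) ∈ langI I E) ↔
      ∃ p ∈ Seps E, ∃ r : V → List A, Fm.eval I r p.2 = true := by
  constructor
  · rintro ⟨r, hr⟩
    obtain ⟨p, hp, -, he⟩ := (nullIr_iff I E r).mp hr
    exact ⟨p, hp, r, he⟩
  · rintro ⟨p, hp, r, he⟩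
    refine ⟨rX p.1 r, (nullIr_iff I E (rX p.1 r)).mpr ⟨p, hp, ?_, ?_⟩⟩
    · intro x hx
      simp [rX, hx]
    · have : Fm.eval I (rX p.1 r) p.2 = Fm.eval I r (Fm.substEps p.1 p.2) :=
        (fm_substEps_eval I r p.1 p.2).symm
      rw [this, Seps_substEps_fix E p hp, he]
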